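/- For any graph G and PSD forcing set B, the PSD propagation time of B in G equals the maximum, over connected components C of G − B, of the PSD propagation time of B in the induced subgraph G[V(C) ∪ B]; moreover this is at most the maximum number of vertices in a component of G − B. -/

import Mathlib

open SimpleGraph Set

variable {V : Type*}

/-- The subgraph of `G` obtained by deleting the vertices of `B`
(kept as isolated vertices). -/
def delVerts (G : SimpleGraph V) (B : Set V) : SimpleGraph V where
  Adj a b := G.Adj a b ∧ a ∉ B ∧ b ∉ B
  symm := ⟨fun _ _ ⟨h, ha, hb⟩ => ⟨h.symm, hb, ha⟩⟩
  loopless := ⟨fun a ⟨h, _, _⟩ => G.ne_of_adj h rfl⟩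

/-- `u` may PSD-force `w` when the set of blue vertices is `B`:  `u` is blue, `w` is a white
neighbor of `u`, and `w` is the unique white neighbor of `u` in the component of `G - B`
containing `w`. -/
def PSDForce (G : SimpleGraph V) (B : Set V) (u w : V) : Prop :=
  u ∈ B ∧ w ∉ B ∧ G.Adj u w ∧
    ∀ x, G.Adj u x → x ∉ B → (delVerts G B).Reachable x w → x = w

/-- One round of simultaneous PSD forcing starting from blue set `B`. -/
def psdStep (G : SimpleGraph V) (B : Set V) : Set V :=
  B ∪ {w | ∃ u, PSDForce G B u w}

/-- `B` is a PSD forcing set of `G`. -/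
def IsPSDForcingSet (G : SimpleGraph V) (B : Set V) : Prop :=
  ∃ t, (psdStep G)^[t] B = Set.univ

/-- The PSD propagation time `pt_+(G; B)` of the set `B` in `G`. -/
noncomputable def psdPropTime (G : SimpleGraph V) (B : Set V) : ℕ :=
  sInf {t | (psdStep G)^[t] B = Set.univ}

/-- The PSD zero forcing number `Z_+(G)`. -/
noncomputable def psdZ (G : SimpleGraph V) : ℕ :=
  sInf {k | ∃ B : Set V, IsPSDForcingSet G B ∧ B.ncard = k}

/-- The `k`-PSD propagation time `pt_+(G, k)`: the minimum of `pt_+(G; B)` over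
PSD forcing sets `B` of size `k`. -/
noncomputable def psdPt (G : SimpleGraph V) (k : ℕ) : ℕ :=
  sInf {t | ∃ B : Set V, IsPSDForcingSet G B ∧ B.ncard = k ∧ psdPropTime G B = t}

/-- The PSD propagation time `pt_+(G) = pt_+(G, Z_+(G))`. -/
noncomputable def psdPtG (G : SimpleGraph V) : ℕ := psdPt G (psdZ G)

/-- The PSD propagation time of `B` within the induced subgraph `G[U]` (for `B ⊆ U`),
realized by making the vertices outside `U` isolated and initially blue. -/
noncomputable def psdPropTimeOn (G : SimpleGraph V) (U B : Set V) : ℕ :=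
  psdPropTime (delVerts G Uᶜ) (B ∪ Uᶜ)

/-- The vertex set of the component of `G - B` containing the white vertex `w`. -/
def compOf (G : SimpleGraph V) (B : Set V) (w : V) : Set V :=
  {x | x ∉ B ∧ (delVerts G B).Reachable x w}

lemma delVerts_le {G : SimpleGraph V} {A B : Set V} (h : A ⊆ B) : delVerts G B ≤ delVerts G A :=
  fun {_ _} hadj => ⟨hadj.1, fun c => hadj.2.1 (h c), fun c => hadj.2.2 (h c)⟩

lemma delVerts_delVerts (G : SimpleGraph V) (A B : Set V) :
    delVerts (delVerts G A) B = delVerts G (A ∪ B) := by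
  ext a b
  simp only [delVerts, Set.mem_union]
  tauto

lemma subset_psdStep (G : SimpleGraph V) (B : Set V) : B ⊆ psdStep G B :=
  Set.subset_union_left

lemma psdStep_univ (G : SimpleGraph V) : psdStep G (Set.univ : Set V) = Set.univ :=
  Set.univ_subset_iff.mp (subset_psdStep G _)

lemma subset_iterate (G : SimpleGraph V) (B : Set V) (t : ℕ) : B ⊆ (psdStep G)^[t] B := by
  induction t with
  | zero => rfl
  | succ n ih => rw [Function.iterate_succ_apply']
                 exact ih.trans (subset_psdStep G _)

lemma done_mono {G : SimpleGraph V} {B : Set V} {t t' : ℕ} (h : (psdStep G)^[t] B = Set.univ)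
    (htt : t ≤ t') : (psdStep G)^[t'] B = Set.univ := by
  obtain ⟨k, rfl⟩ := Nat.exists_eq_add_of_le htt
  rw [add_comm, Function.iterate_add_apply, h, Function.iterate_fixed (psdStep_univ G) k]

lemma reach_transfer {G : SimpleGraph V} {B S : Set V} {w₀ : V} (hBS : B ⊆ S)
    {x w : V} (hw : w ∈ compOf G B w₀)
    (hr : (delVerts G S).Reachable x w) (hx : x ∉ S) :
    (delVerts G (S ∪ (compOf G B w₀ ∪ B)ᶜ)).Reachable x w := by
  obtain ⟨p⟩ := hr
  revert hx
  induction p with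
  | nil => intro _; exact Reachable.refl _
  | @cons a y w h q ih =>
    intro hx
    obtain ⟨hGadj, haS, hyS⟩ := id h
    have hyC : y ∈ compOf G B w₀ :=
      ⟨fun hyB => hyS (hBS hyB),
        (q.reachable.mono (delVerts_le hBS)).trans hw.2⟩
    have haC : a ∈ compOf G B w₀ :=
      ⟨fun haB => haS (hBS haB),
        (((Walk.cons h q).reachable).mono (delVerts_le hBS)).trans hw.2⟩
    have hedge : (delVerts G (S ∪ (compOf G B w₀ ∪ B)ᶜ)).Adj a y :=
      ⟨hGadj,
        fun hmem => hmem.elim haS (fun hc => hc (Or.inl haC)),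
        fun hmem => hmem.elim hyS (fun hc => hc (Or.inl hyC))⟩
    exact hedge.reachable.trans (ih hw hyS)

lemma delVerts_adj {G : SimpleGraph V} {A : Set V} {a b : V} :
    (delVerts G A).Adj a b ↔ G.Adj a b ∧ a ∉ A ∧ b ∉ A := Iff.rfl

lemma step_local {G : SimpleGraph V} {B S : Set V} {w₀ : V} (hBS : B ⊆ S) :
    psdStep (delVerts G (compOf G B w₀ ∪ B)ᶜ) (S ∪ (compOf G B w₀ ∪ B)ᶜ)
      = psdStep G S ∪ (compOf G B w₀ ∪ B)ᶜ := by
  set C := compOf G B w₀ with hCdef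
  set U := C ∪ B with hUdef
  have hdel : delVerts (delVerts G Uᶜ) (S ∪ Uᶜ) = delVerts G (S ∪ Uᶜ) := by
    rw [delVerts_delVerts]
    congr 1
    rw [Set.union_comm S Uᶜ, ← Set.union_assoc, Set.union_self, Set.union_comm]
  ext v
  simp only [psdStep, Set.mem_union, Set.mem_setOf_eq]
  constructor
  · rintro ((hv | hv) | ⟨u, huB, hvB, hadj, hcond⟩)
    · exact Or.inl (Or.inl hv)
    · exact Or.inr hv
    · have hvS : v ∉ S := fun h => hvB (Or.inl h)
      have hvU : v ∈ U := by
        by_contra h; exact hvB (Or.inr h)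
      have hvC : v ∈ C := hvU.resolve_right (fun h => hvS (hBS h))
      obtain ⟨hGadj, huU', hvU'⟩ := delVerts_adj.mp hadj
      have huU : u ∈ U := by simpa using huU'
      have huS : u ∈ S := huB.resolve_right (fun h => h huU)
      refine Or.inl (Or.inr ⟨u, huS, hvS, hGadj, ?_⟩)
      intro x hxadj hxS hxr
      have hxC : x ∈ C :=
        ⟨fun hxB => hxS (hBS hxB), (hxr.mono (delVerts_le hBS)).trans hvC.2⟩
      refine hcond x (delVerts_adj.mpr ⟨hxadj, huU', fun h => h (Or.inl hxC)⟩)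
        (fun h => h.elim hxS (fun hc => hc (Or.inl hxC))) ?_
      rw [hdel]
      exact reach_transfer hBS hvC hxr hxS
  · rintro ((hv | ⟨u, huS, hvS, hadj, hcond⟩) | hvU)
    · exact Or.inl (Or.inl hv)
    · by_cases hvU : v ∈ Uᶜ
      · exact Or.inl (Or.inr hvU)
      · have hvC : v ∈ C := by
          have : v ∈ U := by simpa using hvU
          exact this.resolve_right (fun h => hvS (hBS h))
        have huU : u ∈ U := by
          by_cases huBmem : u ∈ B
          · exact Or.inr huBmem
          · refine Or.inl ⟨huBmem, ?_⟩
            exact (delVerts_adj.mpr ⟨hadj, huBmem, hvC.1⟩ :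
              (delVerts G B).Adj u v).reachable.trans hvC.2
        refine Or.inr ⟨u, Or.inl huS, fun h => h.elim hvS hvU,
          delVerts_adj.mpr ⟨hadj, fun h => h huU, hvU⟩, ?_⟩
        intro x hxadj hxmem hxr
        have hGxadj : G.Adj u x := (delVerts_adj.mp hxadj).1
        have hxS : x ∉ S := fun h => hxmem (Or.inl h)
        have hxr' : (delVerts G S).Reachable x v := by
          rw [hdel] at hxr
          exact hxr.mono (delVerts_le Set.subset_union_left)
        exact hcond x hGxadj hxS hxr'
    · exact Or.inl (Or.inr hvU)

lemma iter_local {G : SimpleGraph V} {B : Set V} (w₀ : V) (t : ℕ) :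
    (psdStep (delVerts G (compOf G B w₀ ∪ B)ᶜ))^[t] (B ∪ (compOf G B w₀ ∪ B)ᶜ)
      = (psdStep G)^[t] B ∪ (compOf G B w₀ ∪ B)ᶜ := by
  induction t with
  | zero => simp
  | succ n ihn =>
    rw [Function.iterate_succ_apply', ihn, step_local (subset_iterate G B n),
      Function.iterate_succ_apply' (psdStep G) n B]

lemma propTime_le_ncard [Fintype V] (G : SimpleGraph V) :
    ∀ n (B : Set V), Bᶜ.ncard ≤ n → IsPSDForcingSet G B → psdPropTime G B ≤ n := by
  intro n
  induction n with
  | zero =>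
    intro B hc hf
    have hBc : Bᶜ = ∅ := (Set.ncard_eq_zero (Set.toFinite _)).mp (Nat.le_zero.mp hc)
    have hBu : (psdStep G)^[0] B = Set.univ := Set.compl_empty_iff.mp hBc
    exact Nat.sInf_le hBu
  | succ n ih =>
    intro B hc hf
    by_cases hfix : psdStep G B = B
    · obtain ⟨t, ht⟩ := hf
      have h0 : (psdStep G)^[0] B = Set.univ := by
        have := Function.iterate_fixed hfix t
        rw [this] at ht
        exact ht
      exact (Nat.sInf_le h0).trans (Nat.zero_le _)
    · have hss : (psdStep G B)ᶜ ⊂ Bᶜ := by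
        rw [Set.ssubset_iff_subset_ne]
        refine ⟨Set.compl_subset_compl.mpr (subset_psdStep G B), fun h => hfix ?_⟩
        exact compl_injective h
      have hlt : ((psdStep G B)ᶜ).ncard < (Bᶜ).ncard :=
        Set.ncard_lt_ncard hss (Set.toFinite _)
      have hf' : IsPSDForcingSet G (psdStep G B) := by
        obtain ⟨t, ht⟩ := hf
        cases t with
        | zero =>
          refine ⟨0, ?_⟩
          simp only [Function.iterate_zero, id] at ht ⊢
          rw [ht]
          exact psdStep_univ G
        | succ s => exact ⟨s, by rwa [Function.iterate_succ_apply] at ht⟩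
      have h1 : psdPropTime G (psdStep G B) ≤ n := ih _ (by omega) hf'
      have hmem : (psdStep G)^[psdPropTime G (psdStep G B)] (psdStep G B) = Set.univ :=
        Nat.sInf_mem hf'
      have h2 : (psdStep G)^[psdPropTime G (psdStep G B) + 1] B = Set.univ := by
        rw [Function.iterate_succ_apply]
        exact hmem
      exact (Nat.sInf_le h2).trans (by omega)


/-- `pt_+(G;B)` equals the maximum over components `C` of `G - B` of
`pt_+(G[V(C) ∪ B]; B)`, and is at most the maximum number of vertices in a component
of `G - B`. -/
theorem stmt3 [Fintype V] (G : SimpleGraph V) (B : Set V) (hB : IsPSDForcingSet G B) :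
    psdPropTime G B =
      sSup ((fun w => psdPropTimeOn G (compOf G B w ∪ B) B) '' Bᶜ) ∧
    psdPropTime G B ≤ sSup ((fun w => (compOf G B w).ncard) '' Bᶜ) := by
  classical
  have hTdone : (psdStep G)^[psdPropTime G B] B = Set.univ := Nat.sInf_mem hB
  have hlociff : ∀ (w : V) (t : ℕ),
      ((psdStep (delVerts G (compOf G B w ∪ B)ᶜ))^[t] (B ∪ (compOf G B w ∪ B)ᶜ) = Set.univ)
        ↔ compOf G B w ⊆ (psdStep G)^[t] B := by
    intro w t
    rw [iter_local]
    constructor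
    · intro h x hx
      have hx2 : x ∈ (psdStep G)^[t] B ∪ (compOf G B w ∪ B)ᶜ := h ▸ Set.mem_univ x
      rcases hx2 with h' | h'
      · exact h'
      · exact absurd (Or.inl hx) h'
    · intro h
      apply Set.eq_univ_of_forall
      intro x
      by_cases hx : x ∈ compOf G B w ∪ B
      · rcases hx with hx | hx
        · exact Or.inl (h hx)
        · exact Or.inl (subset_iterate G B t hx)
      · exact Or.inr hx
  have hglob : ∀ t, ((psdStep G)^[t] B = Set.univ)
      ↔ ∀ w ∉ B, compOf G B w ⊆ (psdStep G)^[t] B := by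
    intro t
    constructor
    · intro h w _ x _
      rw [h]; trivial
    · intro h
      apply Set.eq_univ_of_forall
      intro x
      by_cases hx : x ∈ B
      · exact subset_iterate G B t hx
      · exact h x hx ⟨hx, Reachable.refl _⟩
  have hloc_at_T : ∀ w ∈ Bᶜ,
      (psdStep (delVerts G (compOf G B w ∪ B)ᶜ))^[psdPropTime G B]
        (B ∪ (compOf G B w ∪ B)ᶜ) = Set.univ :=
    fun w hw => (hlociff w _).mpr ((hglob _).mp hTdone w hw)
  have hforce_loc : ∀ w ∈ Bᶜ,
      IsPSDForcingSet (delVerts G (compOf G B w ∪ B)ᶜ) (B ∪ (compOf G B w ∪ B)ᶜ) :=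
    fun w hw => ⟨_, hloc_at_T w hw⟩
  have hgle : ∀ w ∈ Bᶜ, psdPropTimeOn G (compOf G B w ∪ B) B ≤ psdPropTime G B :=
    fun w hw => Nat.sInf_le (hloc_at_T w hw)
  have hMT : sSup ((fun w => psdPropTimeOn G (compOf G B w ∪ B) B) '' Bᶜ) ≤ psdPropTime G B := by
    apply csSup_le'
    rintro t ⟨w, hw, rfl⟩
    exact hgle w hw
  have hTM : psdPropTime G B ≤
      sSup ((fun w => psdPropTimeOn G (compOf G B w ∪ B) B) '' Bᶜ) := by
    apply Nat.sInf_le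
    apply (hglob _).mpr
    intro w hw
    apply (hlociff w _).mp
    have hgw : psdPropTimeOn G (compOf G B w ∪ B) B ≤
        sSup ((fun w => psdPropTimeOn G (compOf G B w ∪ B) B) '' Bᶜ) :=
      le_csSup ((Set.toFinite _).bddAbove) ⟨w, hw, rfl⟩
    have hdone_gw : (psdStep (delVerts G (compOf G B w ∪ B)ᶜ))^[psdPropTimeOn G (compOf G B w ∪ B) B]
        (B ∪ (compOf G B w ∪ B)ᶜ) = Set.univ :=
      Nat.sInf_mem (hforce_loc w hw)
    exact done_mono hdone_gw hgw
  have part1 : psdPropTime G B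
      = sSup ((fun w => psdPropTimeOn G (compOf G B w ∪ B) B) '' Bᶜ) :=
    le_antisymm hTM hMT
  refine ⟨part1, ?_⟩
  rw [part1]
  apply csSup_le'
  rintro t ⟨w, hw, rfl⟩
  have hc : (B ∪ (compOf G B w ∪ B)ᶜ)ᶜ = compOf G B w := by
    ext x
    simp only [Set.mem_compl_iff, Set.mem_union, compOf, Set.mem_setOf_eq]
    tauto
  have h1 : psdPropTimeOn G (compOf G B w ∪ B) B ≤ (compOf G B w).ncard :=
    propTime_le_ncard _ _ _ (by rw [hc]) (hforce_loc w hw)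
  exact h1.trans (le_csSup ((Set.toFinite _).bddAbove) ⟨w, hw, rfl⟩)
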